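/- For binary Y and Z, consider the saturated logistic missingness model P_θ(R=1|z,y) = expit(θ₀ + θ₁z + θ₂y + θ₃zy) with θ ∈ ℝ⁴ and P_ξ(Y=1) parameterized by ξ. For every (θ, ξ) with P_ξ a nondegenerate distribution, there exists (θ̃, ξ̃) ≠ (θ, ξ) such that P_θ(R=1|z,y)/P_{θ̃}(R=1|z,y) = P_{ξ̃}(y)/P_ξ(y) for all z, y ∈ {0,1}. Hence the saturated model is not identified. -/

import Mathlib

noncomputable def expit (t : ℝ) : ℝ := 1 / (1 + Real.exp (-t))

/-- pmf of a Bernoulli(p) outcome. -/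
def bern (p : ℝ) (y : Bool) : ℝ := if y then p else 1 - p

/-- indicator of a binary value as a real number. -/
def ind (b : Bool) : ℝ := if b then 1 else 0

lemma expit_pos (t : ℝ) : 0 < expit t := by
  unfold expit; positivity

lemma expit_lt_one (t : ℝ) : expit t < 1 := by
  unfold expit
  rw [div_lt_one (by positivity)]
  linarith [Real.exp_pos (-t)]

noncomputable def logit (x : ℝ) : ℝ := Real.log (x / (1 - x))

lemma expit_logit (x : ℝ) (h0 : 0 < x) (h1 : x < 1) : expit (logit x) = x := by
  have h2 : 0 < 1 - x := by linarith
  unfold expit logit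
  rw [Real.exp_neg, Real.exp_log (by positivity)]
  field_simp
  ring

/-- key lemma: expit θ / expit (logit (expit θ / c)) = c for appropriate c. -/
lemma ratio_lemma (a c : ℝ) (hc : 0 < c) (h : expit a < c) :
    expit a / expit (logit (expit a / c)) = c := by
  rw [expit_logit _ (div_pos (expit_pos a) hc) (by rw [div_lt_one hc]; exact h)]
  rw [div_div_eq_mul_div, mul_comm, mul_div_assoc, div_self (ne_of_gt (expit_pos a)), mul_one]

/-- For binary `Y` and `Z`, the saturated logistic missingness
model `P_θ(R=1|z,y) = expit (θ₀ + θ₁ z + θ₂ y + θ₃ z y)` together with a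
nondegenerate Bernoulli outcome law `P_ξ(Y=1) = p` is not identified: for any
`(θ, p)` there exists a different candidate `(θ̃, p̃)` (with `p̃` nondegenerate)
satisfying `P_θ(R=1|z,y) / P_θ̃(R=1|z,y) = P_ξ̃(y) / P_ξ(y)` for all
`z, y ∈ {0,1}`. -/
theorem stmt3 (θ₀ θ₁ θ₂ θ₃ p : ℝ) (hp0 : 0 < p) (hp1 : p < 1) :
    ∃ t₀ t₁ t₂ t₃ p' : ℝ, 0 < p' ∧ p' < 1 ∧
      (t₀, t₁, t₂, t₃, p') ≠ (θ₀, θ₁, θ₂, θ₃, p) ∧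
      ∀ z y : Bool,
        expit (θ₀ + θ₁ * ind z + θ₂ * ind y + θ₃ * ind z * ind y) /
          expit (t₀ + t₁ * ind z + t₂ * ind y + t₃ * ind z * ind y) =
          bern p' y / bern p y := by
  set M : ℝ := max (expit θ₀) (expit (θ₀ + θ₁)) with hM
  have hM0 : 0 < M := lt_max_of_lt_left (expit_pos θ₀)
  have hM1 : M < 1 := max_lt (expit_lt_one _) (expit_lt_one _)
  set p' : ℝ := (p + (1 - M * (1 - p))) / 2 with hp'
  have hpp' : p < p' := by
    have : M * (1 - p) < 1 - p := by nlinarith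
    simp only [hp']; linarith
  have hp'1 : p' < 1 := by
    have : 0 < M * (1 - p) := mul_pos hM0 (by linarith)
    simp only [hp']; linarith
  have hp'0 : 0 < p' := lt_trans hp0 hpp'
  set c₀ : ℝ := (1 - p') / (1 - p) with hc₀
  set c₁ : ℝ := p' / p with hc₁
  have hc₀val : c₀ = (1 + M) / 2 := by
    rw [hc₀, hp', div_eq_div_iff (by linarith) (by norm_num)]
    ring
  have hc₀pos : 0 < c₀ := by rw [hc₀val]; linarith
  have hc₁pos : 0 < c₁ := by positivity
  have hc₀gt : M < c₀ := by rw [hc₀val]; linarith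
  have hc₁gt : 1 < c₁ := by rw [hc₁, lt_div_iff₀ hp0]; linarith
  set t₀ := logit (expit θ₀ / c₀) with ht₀
  set A := logit (expit (θ₀ + θ₁) / c₀) with hA
  set B := logit (expit (θ₀ + θ₂) / c₁) with hB
  set C := logit (expit (θ₀ + θ₁ + θ₂ + θ₃) / c₁) with hC
  refine ⟨t₀, A - t₀, B - t₀, C - A - B + t₀, p', hp'0, hp'1, ?_, ?_⟩
  · intro h
    have := congrArg (fun q => q.2.2.2.2) h
    simp at this
    linarith
  · intro z y
    cases z <;> cases y <;> simp only [ind, bern, if_true, if_false, Bool.false_eq_true,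
      mul_zero, mul_one, add_zero, zero_mul, one_mul]
    · exact ratio_lemma θ₀ c₀ hc₀pos (lt_of_le_of_lt (le_max_left _ _) hc₀gt)
    · have h : t₀ + (B - t₀) = B := by ring
      rw [h]
      exact ratio_lemma (θ₀ + θ₂) c₁ hc₁pos (lt_trans (expit_lt_one _) hc₁gt)
    · have h : t₀ + (A - t₀) = A := by ring
      rw [h]
      exact ratio_lemma (θ₀ + θ₁) c₀ hc₀pos (lt_of_le_of_lt (le_max_right _ _) hc₀gt)
    · have h : t₀ + (A - t₀) + (B - t₀) + (C - A - B + t₀) = C := by ring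
      rw [h]
      exact ratio_lemma (θ₀ + θ₁ + θ₂ + θ₃) c₁ hc₁pos (lt_trans (expit_lt_one _) hc₁gt)
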